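/- (Theorem 3: optimal randomization detects non-Doob optimal martingales.) Let M = M* − S ∈ M^{∘,0} (S a martingale with S_0 = 0), let (ξ_j)_{j=0,…,J} be i.i.d. random variables independent of F_J, taking values in (−∞, 1], with E[ξ_j] = 0 and P̃(ξ_j > 1 − ε) > 0 for every ε ∈ (0,1) (as holds when the ξ_j have a continuous density p supported on (−∞,1] with p(1) > 0), and set η_j := ξ_j (Y*_j − Z_j + A*_j). Then the randomizers η_j satisfy η_j ≤ Y*_j − Z_j + A*_j, and if M ≠ M* with positive probability (i.e. P̃(M_j ≠ M*_j for some j) > 0), then E[ max_{0 ≤ j ≤ J} ( Z_j − M_j + η_j ) ] > Y*_0. -/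

import Mathlib

open MeasureTheory ProbabilityTheory Finset

private lemma integrable_finset_sup'_aux {Ω : Type*} {mΩ : MeasurableSpace Ω} {μ : Measure Ω}
    (s : Finset ℕ) (f : ℕ → Ω → ℝ) :
    ∀ (hs : s.Nonempty), (∀ i ∈ s, Integrable (f i) μ) →
      Integrable (fun ω => s.sup' hs fun i => f i ω) μ := by
  induction s using Finset.cons_induction with
  | empty => intro h; simp at h
  | cons a s ha ih =>
    intro _ hf
    rcases s.eq_empty_or_nonempty with rfl | hs
    · simpa using hf a (by simp)
    · have h1 := ih hs (fun i hi => hf i (Finset.mem_cons_of_mem hi))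
      have h2 := hf a (Finset.mem_cons_self a s)
      have h3 : Integrable ((f a) ⊔ fun ω => s.sup' hs fun i => f i ω) μ := h2.sup h1
      have : (fun ω => (Finset.cons a s ha).sup' (Finset.cons_nonempty ha) fun i => f i ω)
          = (f a) ⊔ fun ω => s.sup' hs fun i => f i ω := by
        funext ω
        simp only [Finset.sup'_cons hs, Pi.sup_apply]
      rwa [this]

/-- **Theorem 3: optimal randomization detects non-Doob optimal martingales.** Let
`M = M⋆ − S` (with `S` a martingale, `S 0 = 0`) be weakly optimal at `0`, let `(ξ j)_{j≤J}` be
i.i.d. random variables independent of `ℱ J`, taking values in `(−∞,1]`, with `E[ξ j] = 0` and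
`ℙ(ξ j > 1 − ε) > 0` for every `ε ∈ (0,1)`, and set `η j := ξ j • (Y j − Z j + A⋆ j)`. Then
the randomizers satisfy `η j ≤ Y j − Z j + A⋆ j`, and if `M ≠ M⋆` with positive probability
then `E[ max_{0 ≤ j ≤ J} (Z j − M j + η j) ] > Y⋆ 0` (with `ℱ 0` ℙ-trivial, `Y⋆ 0` is a.s.
constant and equal to its expectation). -/
theorem optimal_randomization_detects_non_doob
    {Ω : Type*} {mΩ : MeasurableSpace Ω} {μ : Measure Ω} [IsProbabilityMeasure μ]
    (J : ℕ) (ℱ : Filtration ℕ mΩ)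
    (hF0 : ∀ s : Set Ω, MeasurableSet[ℱ 0] s → μ s = 0 ∨ μ s = 1)
    (Z Y Mstar Astar : ℕ → Ω → ℝ)
    (hZ_adapted : Adapted ℱ Z)
    (hZ_int : ∀ j, Integrable (Z j) μ)
    (hYJ : ∀ ω, Y J ω = Z J ω)
    (hY : ∀ j, j < J → ∀ ω, Y j ω = max (Z j ω) ((μ[Y (j + 1) | ℱ j]) ω))
    (hMstar : ∀ j ω, Mstar j ω =
      ∑ l ∈ Finset.range j, (Y (l + 1) ω - (μ[Y (l + 1) | ℱ l]) ω))
    (hAstar : ∀ j ω, Astar j ω =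
      ∑ l ∈ Finset.range j, (Y l ω - (μ[Y (l + 1) | ℱ l]) ω))
    -- the martingale shift `S` and the weakly optimal martingale `M = M⋆ − S`
    (S M : ℕ → Ω → ℝ)
    (hS : Martingale S ℱ μ)
    (hS0 : ∀ ω, S 0 ω = 0)
    (hMdef : ∀ j ω, M j ω = Mstar j ω - S j ω)
    (hMopt : Y 0 =ᵐ[μ] μ[fun ω => (Finset.Icc 0 J).sup'
        (Finset.nonempty_Icc.mpr (Nat.zero_le J)) (fun r => Z r ω - M r ω) | ℱ 0])
    -- the i.i.d. randomization variables `ξ j`, independent of `ℱ J`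
    (ξ : ℕ → Ω → ℝ)
    (hξ_meas : ∀ j, Measurable (ξ j))
    (hξ_int : ∀ j, Integrable (ξ j) μ)
    (hξ_indep : iIndepFun ξ μ)
    (hξ_id : ∀ i j : ℕ, IdentDistrib (ξ i) (ξ j) μ μ)
    (hξ_F : Indep (MeasurableSpace.comap (fun ω => fun j => ξ j ω)
        (MeasurableSpace.pi : MeasurableSpace (ℕ → ℝ))) (ℱ J) μ)
    (hξ_le_one : ∀ j ω, ξ j ω ≤ 1)
    (hξ_mean : ∀ j, ∫ ω, ξ j ω ∂μ = 0)
    (hξ_tail : ∀ j, ∀ ε : ℝ, 0 < ε → ε < 1 → 0 < μ {ω | 1 - ε < ξ j ω})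
    -- the optimal randomizers
    (η : ℕ → Ω → ℝ)
    (hη : ∀ j ω, η j ω = ξ j ω * (Y j ω - Z j ω + Astar j ω)) :
    (∀ j, j ≤ J → ∀ᵐ ω ∂μ, η j ω ≤ Y j ω - Z j ω + Astar j ω) ∧
    (0 < μ {ω | ∃ j, j ≤ J ∧ M j ω ≠ Mstar j ω} →
      ∫ ω, Y 0 ω ∂μ <
        ∫ ω, (Finset.Icc 0 J).sup' (Finset.nonempty_Icc.mpr (Nat.zero_le J))
          (fun j => Z j ω - M j ω + η j ω) ∂μ) := by
  classical
  have hne : (Finset.Icc 0 J).Nonempty := Finset.nonempty_Icc.mpr (Nat.zero_le J)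
  -- the "dual slack" process q and the randomized process g
  set q : ℕ → Ω → ℝ := fun j ω => Y j ω - Z j ω + Astar j ω with hq_def
  set g : ℕ → Ω → ℝ := fun j ω => S j ω - (1 - ξ j ω) * q j ω with hg_def
  set X : Ω → ℝ := fun ω => (Finset.Icc 0 J).sup' hne fun j => g j ω with hX_def
  -- measurability and integrability of the Snell envelope
  have hYmeas : ∀ j, j ≤ J → StronglyMeasurable[ℱ j] (Y j) := by
    intro j hj
    rcases lt_or_eq_of_le hj with h | rfl
    · have : Y j = fun ω => max (Z j ω) ((μ[Y (j + 1) | ℱ j]) ω) := funext (hY j h)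
      rw [this]
      exact ((hZ_adapted j).max
        stronglyMeasurable_condExp.measurable).stronglyMeasurable
    · have : Y j = Z j := funext hYJ
      rw [this]; exact (hZ_adapted j).stronglyMeasurable
  have hYint : ∀ j, j ≤ J → Integrable (Y j) μ := by
    intro j hj
    rcases lt_or_eq_of_le hj with h | rfl
    · have : Y j = fun ω => max (Z j ω) ((μ[Y (j + 1) | ℱ j]) ω) := funext (hY j h)
      rw [this]
      exact (hZ_int j).sup (integrable_condExp (m := ℱ j) (f := Y (j + 1)))
    · have : Y j = Z j := funext hYJ
      rw [this]; exact hZ_int j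
  have hAmeas : ∀ j, j ≤ J → StronglyMeasurable[ℱ J] (Astar j) := by
    intro j hj
    have : Astar j = fun ω => ∑ l ∈ Finset.range j, (Y l ω - (μ[Y (l + 1) | ℱ l]) ω) :=
      funext (hAstar j)
    rw [this]
    apply Measurable.stronglyMeasurable
    apply Finset.measurable_sum
    intro l hl
    have hlJ : l ≤ J := le_trans (Nat.le_of_lt (Finset.mem_range.mp hl)) hj
    exact (((hYmeas l hlJ).mono (ℱ.mono hlJ)).measurable.sub
      ((stronglyMeasurable_condExp.mono (ℱ.mono hlJ)).measurable))
  have hAint : ∀ j, j ≤ J → Integrable (Astar j) μ := by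
    intro j hj
    have : Astar j = fun ω => ∑ l ∈ Finset.range j, (Y l ω - (μ[Y (l + 1) | ℱ l]) ω) :=
      funext (hAstar j)
    rw [this]
    apply integrable_finset_sum
    intro l hl
    have hlJ : l ≤ J := le_trans (Nat.le_of_lt (Finset.mem_range.mp hl)) hj
    exact (hYint l hlJ).sub integrable_condExp
  have hqmeas : ∀ j, j ≤ J → StronglyMeasurable[ℱ J] (q j) := by
    intro j hj
    exact ((((hYmeas j hj).mono (ℱ.mono hj)).sub
      ((hZ_adapted j).mono (ℱ.mono hj) le_rfl).stronglyMeasurable).add (hAmeas j hj))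
  have hqint : ∀ j, j ≤ J → Integrable (q j) μ := by
    intro j hj
    exact (((hYint j hj).sub (hZ_int j)).add (hAint j hj))
  -- nonnegativity of q
  have hYZ : ∀ j, j ≤ J → ∀ ω, Z j ω ≤ Y j ω := by
    intro j hj ω
    rcases lt_or_eq_of_le hj with h | rfl
    · rw [hY j h ω]; exact le_max_left _ _
    · rw [hYJ ω]
  have hYce : ∀ l, l < J → ∀ ω, (μ[Y (l + 1) | ℱ l]) ω ≤ Y l ω := by
    intro l hl ω
    rw [hY l hl ω]; exact le_max_right _ _
  have hAnonneg : ∀ j, j ≤ J → ∀ ω, 0 ≤ Astar j ω := by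
    intro j hj ω
    rw [hAstar j ω]
    apply Finset.sum_nonneg
    intro l hl
    have hlJ : l < J := lt_of_lt_of_le (Finset.mem_range.mp hl) hj
    have := hYce l hlJ ω
    linarith
  have hqnonneg : ∀ j, j ≤ J → ∀ ω, 0 ≤ q j ω := by
    intro j hj ω
    have h1 := hYZ j hj ω
    have h2 := hAnonneg j hj ω
    simp only [hq_def]
    linarith
  -- Part 1
  refine ⟨?_, ?_⟩
  · intro j hj
    filter_upwards with ω
    rw [hη j ω]
    exact mul_le_of_le_one_left (hqnonneg j hj ω) (hξ_le_one j ω)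
  -- Part 2
  intro hpos
  -- the Doob decomposition identity
  have hdoob : ∀ j ω, Mstar j ω = Y j ω - Y 0 ω + Astar j ω := by
    intro j ω
    have htel : Mstar j ω - Astar j ω = Y j ω - Y 0 ω := by
      rw [hMstar j ω, hAstar j ω, ← Finset.sum_sub_distrib]
      have : ∀ l ∈ Finset.range j,
          (Y (l + 1) ω - (μ[Y (l + 1) | ℱ l]) ω) - (Y l ω - (μ[Y (l + 1) | ℱ l]) ω)
            = Y (l + 1) ω - Y l ω := by intro l _; ring
      rw [Finset.sum_congr rfl this, Finset.sum_range_sub (fun l => Y l ω)]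
    linarith
  -- the pointwise identity for the integrand
  have hid : ∀ ω, (Finset.Icc 0 J).sup' hne (fun j => Z j ω - M j ω + η j ω)
      = Y 0 ω + X ω := by
    intro ω
    have h1 : (Finset.Icc 0 J).sup' hne (fun j => Z j ω - M j ω + η j ω)
        = (Finset.Icc 0 J).sup' hne (fun j => Y 0 ω + g j ω) := by
      apply Finset.sup'_congr hne rfl
      intro j _
      rw [hMdef j ω, hη j ω, hdoob j ω]
      simp only [hg_def, hq_def]
      ring
    rw [h1]
    exact (Finset.comp_sup'_eq_sup'_comp (γ := ℝ) hne (f := fun j => g j ω)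
      (fun x => Y 0 ω + x) (fun x y => by
        exact (max_add_add_left _ _ _).symm)).symm
  -- integrability of the randomized dual components
  have hgint : ∀ j, j ≤ J → Integrable (g j) μ := by
    intro j hj
    have hind : IndepFun (ξ j) (q j) μ := by
      rw [IndepFun_iff_Indep]
      rw [Indep_iff]
      intro t1 t2 ht1 ht2
      obtain ⟨s1, hs1, rfl⟩ := ht1
      obtain ⟨s2, hs2, rfl⟩ := ht2
      refine (Indep_iff _ _ _).1 hξ_F _ _ ?_ ?_
      · exact ⟨(fun f : ℕ → ℝ => f j) ⁻¹' s1, (measurable_pi_apply j) hs1, rfl⟩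
      · exact (hqmeas j hj).measurable hs2
    have hmul : Integrable (fun ω => ξ j ω * q j ω) μ :=
      hind.integrable_mul (hξ_int j) (hqint j hj)
    have : g j = fun ω => (S j ω - q j ω) + ξ j ω * q j ω := by
      funext ω; simp only [hg_def]; ring
    rw [this]
    exact ((hS.integrable j).sub (hqint j hj)).add hmul
  have hXint : Integrable X μ := by
    apply integrable_finset_sup'_aux
    intro j hj
    exact hgint j (by simpa using (Finset.mem_Icc.mp hj).2)
  -- the stopping time τ
  have hex : ∀ ω, ∃ j, Y j ω = Z j ω := fun ω => ⟨J, hYJ ω⟩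
  set τ : Ω → ℕ := fun ω => Nat.find (hex ω) with hτ_def
  have hτle : ∀ ω, τ ω ≤ J := fun ω => Nat.find_le (hYJ ω)
  have hτspec : ∀ ω, Y (τ ω) ω = Z (τ ω) ω := fun ω => Nat.find_spec (hex ω)
  have hτmin : ∀ ω, ∀ l, l < τ ω → Y l ω ≠ Z l ω := fun ω l hl => Nat.find_min (hex ω) hl
  have hqτ : ∀ ω, q (τ ω) ω = 0 := by
    intro ω
    have hA : Astar (τ ω) ω = 0 := by
      rw [hAstar]
      apply Finset.sum_eq_zero
      intro l hl
      have hlτ : l < τ ω := Finset.mem_range.mp hl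
      have hlJ : l < J := lt_of_lt_of_le hlτ (hτle ω)
      have hmax := hY l hlJ ω
      rcases max_cases (Z l ω) ((μ[Y (l + 1) | ℱ l]) ω) with ⟨h1, _⟩ | ⟨h1, _⟩
      · exact absurd (hmax.trans h1) (hτmin ω l hlτ)
      · rw [hmax, h1]; ring
    simp only [hq_def, hτspec ω, hA]
    ring
  -- measurability of the level sets of τ
  have hCmeas : ∀ j, j ≤ J → MeasurableSet[ℱ j] {ω | τ ω = j} := by
    intro j hj
    have hset : {ω | τ ω = j}
        = ({ω | Y j ω = Z j ω} ∩ ⋂ l ∈ Finset.range j, {ω | Y l ω ≠ Z l ω}) := by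
      ext ω
      simp only [Set.mem_setOf_eq, Set.mem_inter_iff, Set.mem_iInter, Finset.mem_range,
        hτ_def, Nat.find_eq_iff]
    rw [hset]
    have hYjm : Measurable[ℱ j] (Y j) := (hYmeas j hj).measurable
    have hZjm : Measurable[ℱ j] (Z j) := hZ_adapted j
    refine MeasurableSet.inter (measurableSet_eq_fun hYjm hZjm) ?_
    refine MeasurableSet.biInter (Set.to_countable _) ?_
    intro l hl
    have hlj : l ≤ j := le_of_lt (Finset.mem_range.mp hl)
    have hYlm : Measurable[ℱ j] (Y l) :=
      ((hYmeas l (hlj.trans hj)).mono (ℱ.mono hlj)).measurable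
    have hZlm : Measurable[ℱ j] (Z l) :=
      (hZ_adapted l).mono (ℱ.mono hlj) le_rfl
    exact (measurableSet_eq_fun hYlm hZlm).compl
  -- the stopped martingale value S_τ as a sum of indicators
  have hpoint : ∀ (f : ℕ → Ω → ℝ) (ω : Ω),
      (∑ j ∈ Finset.range (J + 1), ({ω' | τ ω' = j}).indicator (f j) ω) = f (τ ω) ω := by
    intro f ω
    rw [Finset.sum_eq_single (τ ω)]
    · exact Set.indicator_of_mem (by simp) _
    · intro j _ hji
      exact Set.indicator_of_notMem (by simpa using fun h => hji h.symm) _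
    · intro h
      exact absurd (Finset.mem_range.mpr (Nat.lt_succ_of_le (hτle ω))) h
  have hSτrep : (fun ω => S (τ ω) ω)
      = fun ω => ∑ j ∈ Finset.range (J + 1), ({ω' | τ ω' = j}).indicator (S j) ω :=
    funext fun ω => (hpoint S ω).symm
  have hSτmeas : StronglyMeasurable[ℱ J] (fun ω => S (τ ω) ω) := by
    rw [hSτrep]
    apply Measurable.stronglyMeasurable
    apply Finset.measurable_sum
    intro j hj
    have hjJ : j ≤ J := Nat.lt_succ_iff.mp (Finset.mem_range.mp hj)
    exact Measurable.indicator ((hS.1 j).mono (ℱ.mono hjJ)).measurable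
      ((ℱ.mono hjJ) _ (hCmeas j hjJ))
  have hSτint : Integrable (fun ω => S (τ ω) ω) μ := by
    rw [hSτrep]
    apply integrable_finset_sum
    intro j hj
    have hjJ : j ≤ J := Nat.lt_succ_iff.mp (Finset.mem_range.mp hj)
    exact (hS.integrable j).indicator (ℱ.le j _ (hCmeas j hjJ))
  -- the expectations of S j and S τ vanish
  have hSmean : ∀ j, ∫ ω, S j ω ∂μ = 0 := by
    intro j
    have h1 : ∫ ω, S j ω ∂μ = ∫ ω, (μ[S j | ℱ 0]) ω ∂μ := (integral_condExp (ℱ.le 0)).symm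
    rw [h1, integral_congr_ae (hS.2 0 j (Nat.zero_le j))]
    simp [hS0]
  have hSτmean : ∫ ω, S (τ ω) ω ∂μ = 0 := by
    rw [hSτrep, integral_finset_sum]
    · have hstep : ∀ j ∈ Finset.range (J + 1),
          ∫ ω, ({ω' | τ ω' = j}).indicator (S j) ω ∂μ
            = ∫ ω, ({ω' | τ ω' = j}).indicator (S J) ω ∂μ := by
        intro j hj
        have hjJ : j ≤ J := Nat.lt_succ_iff.mp (Finset.mem_range.mp hj)
        have hCm : MeasurableSet {ω | τ ω = j} := ℱ.le j _ (hCmeas j hjJ)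
        rw [integral_indicator hCm, integral_indicator hCm]
        have h1 : ∫ ω in {ω | τ ω = j}, S j ω ∂μ
            = ∫ ω in {ω | τ ω = j}, (μ[S J | ℱ j]) ω ∂μ := by
          apply setIntegral_congr_ae hCm
          filter_upwards [hS.2 j J hjJ] with ω hω _ using hω.symm
        rw [h1, setIntegral_condExp (ℱ.le j) (hS.integrable J) (hCmeas j hjJ)]
      rw [Finset.sum_congr rfl hstep, ← integral_finset_sum]
      · have : (fun ω => ∑ j ∈ Finset.range (J + 1), ({ω' | τ ω' = j}).indicator (S J) ω)
            = S J := funext fun ω => hpoint (fun _ => S J) ω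
        rw [this, hSmean J]
      · intro j hj
        have hjJ : j ≤ J := Nat.lt_succ_iff.mp (Finset.mem_range.mp hj)
        exact (hS.integrable J).indicator (ℱ.le j _ (hCmeas j hjJ))
    · intro j hj
      have hjJ : j ≤ J := Nat.lt_succ_iff.mp (Finset.mem_range.mp hj)
      exact (hS.integrable j).indicator (ℱ.le j _ (hCmeas j hjJ))
  -- X dominates S τ pointwise
  have hXge : ∀ ω, S (τ ω) ω ≤ X ω := by
    intro ω
    have hmem : τ ω ∈ Finset.Icc 0 J := Finset.mem_Icc.mpr ⟨Nat.zero_le _, hτle ω⟩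
    have := Finset.le_sup' (fun j => g j ω) hmem
    simpa only [hg_def, hqτ ω, mul_zero, sub_zero] using this
  -- the key strict positivity
  have hXpos : 0 < ∫ ω, X ω ∂μ := by
    by_contra hcon
    push_neg at hcon
    have hge : (0 : ℝ) ≤ ∫ ω, X ω ∂μ := by
      calc (0:ℝ) = ∫ ω, S (τ ω) ω ∂μ := hSτmean.symm
      _ ≤ ∫ ω, X ω ∂μ := integral_mono hSτint hXint hXge
    have hXzero : ∫ ω, X ω ∂μ = 0 := le_antisymm hcon hge
    -- X = S τ a.e.
    have hdiff : (fun ω => X ω - S (τ ω) ω) =ᵐ[μ] 0 := by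
      rw [← integral_eq_zero_iff_of_nonneg_ae]
      · rw [integral_sub hXint hSτint, hXzero, hSτmean]; ring
      · filter_upwards with ω using sub_nonneg.mpr (hXge ω)
      · exact hXint.sub hSτint
    have hXeq : ∀ᵐ ω ∂μ, X ω = S (τ ω) ω := by
      filter_upwards [hdiff] with ω hω
      have : X ω - S (τ ω) ω = 0 := hω
      linarith
    -- deduce S j ≤ S τ a.e. for every j ≤ J
    have hjle : ∀ j, j ≤ J → ∀ᵐ ω ∂μ, S j ω ≤ S (τ ω) ω := by
      intro j hj
      rw [ae_iff]
      by_contra hDpos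
      set D : ℕ → Set Ω := fun n =>
        {ω | S (τ ω) ω + 1 / (n + 1 : ℝ) ≤ S j ω ∧ q j ω ≤ (n : ℝ)} with hD_def
      have hsub : {ω | ¬ S j ω ≤ S (τ ω) ω} ⊆ ⋃ n, D n := by
        intro ω hω
        simp only [Set.mem_setOf_eq, not_le] at hω
        obtain ⟨n, hn⟩ := exists_nat_ge (max (1 / (S j ω - S (τ ω) ω)) (q j ω))
        refine Set.mem_iUnion.mpr ⟨n, ?_, le_trans (le_max_right _ _) hn⟩
        have hgap : 0 < S j ω - S (τ ω) ω := by linarith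
        have h1 : 1 / (S j ω - S (τ ω) ω) ≤ (n : ℝ) := le_trans (le_max_left _ _) hn
        have h2 : 1 / ((n : ℝ) + 1) ≤ S j ω - S (τ ω) ω := by
          rw [div_le_iff₀ (by positivity)]
          rw [div_le_iff₀ hgap] at h1
          nlinarith
        linarith
      have hexn : ∃ n, μ (D n) ≠ 0 := by
        by_contra hall
        push_neg at hall
        exact hDpos (measure_mono_null hsub (measure_iUnion_null hall))
      obtain ⟨n, hn⟩ := hexn
      have hDn_pos : 0 < μ (D n) := hn.bot_lt
      -- D n is ℱ J - measurable
      have hDmeas : MeasurableSet[ℱ J] (D n) := by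
        have h1 : Measurable[ℱ J] fun ω => S (τ ω) ω + 1 / (n + 1 : ℝ) :=
          hSτmeas.measurable.add measurable_const
        have h2 : Measurable[ℱ J] (S j) := ((hS.1 j).mono (ℱ.mono hj)).measurable
        have h3 : Measurable[ℱ J] (q j) := (hqmeas j hj).measurable
        exact (measurableSet_le h1 h2).inter (measurableSet_le h3 measurable_const)
      -- the tail event
      set ε : ℝ := 1 / ((n : ℝ) + 2) ^ 2 with hε_def
      have hε_pos : 0 < ε := by positivity
      have hε_lt : ε < 1 := by
        rw [hε_def, div_lt_one (by positivity)]
        nlinarith [Nat.cast_nonneg (α := ℝ) n]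
      set B : Set Ω := {ω | 1 - ε < ξ j ω} with hB_def
      have hB_pos : 0 < μ B := hξ_tail j ε hε_pos hε_lt
      have hBD : μ (B ∩ D n) = μ B * μ (D n) := by
        refine (Indep_iff _ _ _).1 hξ_F _ _ ?_ hDmeas
        exact ⟨(fun f : ℕ → ℝ => f j) ⁻¹' Set.Ioi (1 - ε),
          (measurable_pi_apply j) measurableSet_Ioi, rfl⟩
      have hBDpos : 0 < μ (B ∩ D n) := by
        rw [hBD]; exact ENNReal.mul_pos (ne_of_gt hB_pos) (ne_of_gt hDn_pos)
      -- find a point where everything holds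
      have hbad : μ {ω | ¬ X ω = S (τ ω) ω} = 0 := hXeq
      have hnotsub : ¬ (B ∩ D n ⊆ {ω | ¬ X ω = S (τ ω) ω}) := by
        intro hsub'
        exact absurd (measure_mono_null hsub' hbad) (ne_of_gt hBDpos)
      obtain ⟨ω, hωBD, hωgood⟩ := Set.not_subset.mp hnotsub
      have hωX : X ω = S (τ ω) ω := by simpa using hωgood
      obtain ⟨hωB, hωD⟩ := hωBD
      have hωB' : 1 - ε < ξ j ω := hωB
      obtain ⟨hωD1, hωD2⟩ := hωD
      -- the contradiction
      have hgle : g j ω ≤ X ω :=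
        Finset.le_sup' (fun j => g j ω) (Finset.mem_Icc.mpr ⟨Nat.zero_le _, hj⟩)
      have hξω : 0 ≤ 1 - ξ j ω := by linarith [hξ_le_one j ω]
      have hqω : 0 ≤ q j ω := hqnonneg j hj ω
      have hprod : (1 - ξ j ω) * q j ω < 1 / ((n : ℝ) + 1) := by
        have h1 : (1 - ξ j ω) * q j ω ≤ ε * (n : ℝ) := by
          calc (1 - ξ j ω) * q j ω ≤ ε * q j ω :=
                mul_le_mul_of_nonneg_right (by linarith) hqω
          _ ≤ ε * (n : ℝ) := mul_le_mul_of_nonneg_left hωD2 (le_of_lt hε_pos)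
        have h2 : ε * (n : ℝ) < 1 / ((n : ℝ) + 1) := by
          rw [hε_def]
          rw [div_mul_eq_mul_div, div_lt_div_iff₀ (by positivity) (by positivity)]
          nlinarith [Nat.cast_nonneg (α := ℝ) n]
        exact h1.trans_lt h2
      have : X ω < g j ω := by
        simp only [hg_def]
        rw [hωX]
        calc S (τ ω) ω ≤ S j ω - 1 / ((n : ℝ) + 1) := by linarith
        _ < S j ω - (1 - ξ j ω) * q j ω := by linarith
      linarith
    -- hence S j = 0 a.e. for all j ≤ J
    have hSτ0 : ∀ᵐ ω ∂μ, S (τ ω) ω = 0 := by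
      have h0 := hjle 0 (Nat.zero_le J)
      have hnn : ∀ᵐ ω ∂μ, 0 ≤ S (τ ω) ω := by
        filter_upwards [h0] with ω hω
        simpa [hS0 ω] using hω
      have := (integral_eq_zero_iff_of_nonneg_ae hnn hSτint).mp hSτmean
      filter_upwards [this] with ω hω using hω
    have hSj0 : ∀ j, j ≤ J → ∀ᵐ ω ∂μ, S j ω = 0 := by
      intro j hj
      have hnn : ∀ᵐ ω ∂μ, 0 ≤ S (τ ω) ω - S j ω := by
        filter_upwards [hjle j hj] with ω hω using by linarith
      have hint : Integrable (fun ω => S (τ ω) ω - S j ω) μ := hSτint.sub (hS.integrable j)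
      have hmean : ∫ ω, (S (τ ω) ω - S j ω) ∂μ = 0 := by
        rw [integral_sub hSτint (hS.integrable j), hSτmean, hSmean j]; ring
      have := (integral_eq_zero_iff_of_nonneg_ae hnn hint).mp hmean
      filter_upwards [this, hSτ0] with ω h1 h2
      have : S (τ ω) ω - S j ω = 0 := h1
      linarith
    -- contradiction with hpos
    have hnull : μ {ω | ∃ j, j ≤ J ∧ M j ω ≠ Mstar j ω} = 0 := by
      have hsub : {ω | ∃ j, j ≤ J ∧ M j ω ≠ Mstar j ω}
          ⊆ ⋃ j, {ω | j ≤ J ∧ S j ω ≠ 0} := by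
        intro ω hω
        obtain ⟨j, hj, hne'⟩ := hω
        refine Set.mem_iUnion.mpr ⟨j, hj, fun h0 => hne' ?_⟩
        rw [hMdef j ω, h0]; ring
      refine measure_mono_null hsub (measure_iUnion_null fun j => ?_)
      rcases le_or_gt j J with hj | hj
      · have h := hSj0 j hj
        rw [ae_iff] at h
        refine measure_mono_null ?_ h
        intro ω hω
        exact hω.2
      · have : {ω | j ≤ J ∧ S j ω ≠ 0} = ∅ := by
          ext ω; simp only [Set.mem_setOf_eq, Set.mem_empty_iff_false, iff_false]
          rintro ⟨h1, _⟩; omega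
        simp [this]
    rw [hnull] at hpos
    exact lt_irrefl _ hpos
  -- conclude
  have hrw : (fun ω => (Finset.Icc 0 J).sup' hne (fun j => Z j ω - M j ω + η j ω))
      = fun ω => Y 0 ω + X ω := funext hid
  rw [hrw, integral_add (hYint 0 (Nat.zero_le J)) hXint]
  linarith
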